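/- Let S ≤ M 8 be the span of the six vectors h₁ = X on qubits 1–4 (((1,0),(1,0),(1,0),(1,0),(0,0),(0,0),(0,0),(0,0))), h₂ = Z on qubits 1–4, h₃ = X on qubits 5–8, h₄ = Z on qubits 5–8, h₅ = ((0,0),(1,0),(1,1),(0,1),(0,0),(1,0),(1,1),(0,1)) (the stabilizer ·XYZ·XYZ), and h₆ = ((0,0),(0,1),(1,0),(1,1),(0,0),(0,1),(1,0),(1,1)) (the stabilizer ·ZXY·ZXY). Then S is isotropic, the F₂-dimension of S is 6, and the minimum Pauli weight over the set S^⊥ω \ S equals 3. (That is, this is an [[8,2,3]] stabilizer code.) -/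
import Mathlib


/-- Binary symplectic representation of `n`-qubit Pauli operators (up to phase). -/
abbrev M (n : ℕ) : Type := Fin n → ZMod 2 × ZMod 2

/-- The symplectic form: two Paulis commute iff it vanishes. -/
def symp {n : ℕ} (u v : M n) : ZMod 2 :=
  ∑ j, ((u j).1 * (v j).2 + (u j).2 * (v j).1)

/-- The (Pauli) weight: the number of qubits on which `v` acts nontrivially. -/
def wt {n : ℕ} (v : M n) : ℕ := (Finset.univ.filter fun j => v j ≠ 0).card

/-- The stabilizer `XXXX····` of the `[[8,2,3]]` code. -/
def h1 : M 8 := ![(1,0),(1,0),(1,0),(1,0),(0,0),(0,0),(0,0),(0,0)]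

/-- The stabilizer `ZZZZ····` of the `[[8,2,3]]` code. -/
def h2 : M 8 := ![(0,1),(0,1),(0,1),(0,1),(0,0),(0,0),(0,0),(0,0)]

/-- The stabilizer `····XXXX` of the `[[8,2,3]]` code. -/
def h3 : M 8 := ![(0,0),(0,0),(0,0),(0,0),(1,0),(1,0),(1,0),(1,0)]

/-- The stabilizer `····ZZZZ` of the `[[8,2,3]]` code. -/
def h4 : M 8 := ![(0,0),(0,0),(0,0),(0,0),(0,1),(0,1),(0,1),(0,1)]

/-- The stabilizer `·XYZ·XYZ` of the `[[8,2,3]]` code. -/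
def h5 : M 8 := ![(0,0),(1,0),(1,1),(0,1),(0,0),(1,0),(1,1),(0,1)]

/-- The stabilizer `·ZXY·ZXY` of the `[[8,2,3]]` code. -/
def h6 : M 8 := ![(0,0),(0,1),(1,0),(1,1),(0,0),(0,1),(1,0),(1,1)]

/-- The stabilizer span of the `[[8,2,3]]` code. -/
def S823 : Submodule (ZMod 2) (M 8) :=
  Submodule.span (ZMod 2) {h1, h2, h3, h4, h5, h6}

set_option maxRecDepth 100000
set_option synthInstance.maxSize 2000
set_option synthInstance.maxHeartbeats 1000000

section Aux

/-- The six stabilizer generators as a family. -/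
def gens : Fin 6 → M 8 := ![h1, h2, h3, h4, h5, h6]

/-- Logical operators. -/
def Lg1 : M 8 := ![(0,0),(0,0),(0,0),(0,0),(0,0),(0,1),(1,1),(1,0)]
def Lg2 : M 8 := ![(0,0),(0,0),(0,0),(0,0),(0,0),(1,0),(0,1),(1,1)]
def Lg3 : M 8 := ![(0,0),(0,0),(0,1),(0,1),(0,0),(0,0),(0,1),(0,1)]
def Lg4 : M 8 := ![(0,0),(0,0),(1,0),(1,0),(0,0),(0,0),(1,0),(1,0)]

/-- A spanning family for the symplectic complement of the stabilizer. -/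
def bs : Fin 10 → M 8 := ![h1, h2, h3, h4, h5, h6, Lg1, Lg2, Lg3, Lg4]

/-- Vectors symplectically dual to the generators. -/
def ts : Fin 6 → M 8 :=
  ![![(0,0),(0,0),(0,0),(0,1),(0,0),(0,0),(1,0),(1,0)],
    ![(0,0),(0,0),(0,0),(1,0),(0,0),(0,0),(1,1),(1,1)],
    ![(0,0),(0,0),(0,0),(0,0),(0,0),(0,0),(1,0),(1,1)],
    ![(0,0),(0,0),(0,0),(0,0),(0,0),(0,0),(1,1),(0,1)],
    ![(0,0),(0,0),(0,0),(0,0),(0,0),(0,0),(0,1),(0,1)],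
    ![(0,0),(0,0),(0,0),(0,0),(0,0),(0,0),(1,0),(1,0)]]

lemma symp_add_right {n : ℕ} (u v w : M n) : symp u (v + w) = symp u v + symp u w := by
  unfold symp
  rw [← Finset.sum_add_distrib]
  refine Finset.sum_congr rfl fun j _ => ?_
  simp only [Pi.add_apply, Prod.fst_add, Prod.snd_add]
  ring

lemma symp_smul_right {n : ℕ} (c : ZMod 2) (u v : M n) : symp u (c • v) = c * symp u v := by
  unfold symp
  rw [Finset.mul_sum]
  refine Finset.sum_congr rfl fun j _ => ?_
  simp only [Pi.smul_apply, Prod.smul_fst, Prod.smul_snd, smul_eq_mul]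
  ring

lemma symp_add_left {n : ℕ} (u v w : M n) : symp (u + v) w = symp u w + symp v w := by
  unfold symp
  rw [← Finset.sum_add_distrib]
  refine Finset.sum_congr rfl fun j _ => ?_
  simp only [Pi.add_apply, Prod.fst_add, Prod.snd_add]
  ring

lemma symp_smul_left {n : ℕ} (c : ZMod 2) (u v : M n) : symp (c • u) v = c * symp u v := by
  unfold symp
  rw [Finset.mul_sum]
  refine Finset.sum_congr rfl fun j _ => ?_
  simp only [Pi.smul_apply, Prod.smul_fst, Prod.smul_snd, smul_eq_mul]
  ring

/-- `symp` with first argument fixed, as a linear map. -/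
def sympR (u : M 8) : M 8 →ₗ[ZMod 2] ZMod 2 where
  toFun := symp u
  map_add' := symp_add_right u
  map_smul' c v := by simp [symp_smul_right]

/-- Pairing with all six generators, as a linear map. -/
def φ : M 8 →ₗ[ZMod 2] (Fin 6 → ZMod 2) where
  toFun v i := symp v (gens i)
  map_add' u v := funext fun i => by simp [symp_add_left]
  map_smul' c v := funext fun i => by simp [symp_smul_left]

lemma phi_apply (v : M 8) (i : Fin 6) : φ v i = symp v (gens i) := rfl

lemma expand10 (g : Fin 10 → ZMod 2) (f : Fin 10 → M 8) :
    ∑ i, g i • f i = g 0 • f 0 + g 1 • f 1 + g 2 • f 2 + g 3 • f 3 + g 4 • f 4 +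
      g 5 • f 5 + g 6 • f 6 + g 7 • f 7 + g 8 • f 8 + g 9 • f 9 := by
  simp [Fin.sum_univ_succ]
  abel

lemma D_iso : ∀ i j : Fin 6, symp (gens i) (gens j) = 0 := by decide

lemma D_perp_bs : ∀ (i : Fin 10) (j : Fin 6), symp (bs i) (gens j) = 0 := by decide

lemma D_ts : ∀ i j : Fin 6, symp (ts i) (gens j) = if i = j then 1 else 0 := by decide

lemma D6 : ∀ c0 c1 c2 c3 c4 c5 : ZMod 2,
    c0 • gens 0 + c1 • gens 1 + c2 • gens 2 + c3 • gens 3 + c4 • gens 4 + c5 • gens 5 = 0 →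
    c0 = 0 ∧ c1 = 0 ∧ c2 = 0 ∧ c3 = 0 ∧ c4 = 0 ∧ c5 = 0 := by decide

lemma D10 : ∀ c0 c1 c2 c3 c4 c5 c6 c7 c8 c9 : ZMod 2,
    c0 • bs 0 + c1 • bs 1 + c2 • bs 2 + c3 • bs 3 + c4 • bs 4 +
      c5 • bs 5 + c6 • bs 6 + c7 • bs 7 + c8 • bs 8 + c9 • bs 9 = 0 →
    c0 = 0 ∧ c1 = 0 ∧ c2 = 0 ∧ c3 = 0 ∧ c4 = 0 ∧ c5 = 0 ∧ c6 = 0 ∧ c7 = 0 ∧ c8 = 0 ∧ c9 = 0 := by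
  decide

lemma DKD : ∀ c0 c1 c2 c3 c4 c5 c6 c7 c8 c9 : ZMod 2,
    wt (c0 • bs 0 + c1 • bs 1 + c2 • bs 2 + c3 • bs 3 + c4 • bs 4 +
      c5 • bs 5 + c6 • bs 6 + c7 • bs 7 + c8 • bs 8 + c9 • bs 9) < 3 →
    c6 = 0 ∧ c7 = 0 ∧ c8 = 0 ∧ c9 = 0 := by
  decide

lemma Dw_notin : ∀ c0 c1 c2 c3 c4 c5 : ZMod 2,
    c0 • gens 0 + c1 • gens 1 + c2 • gens 2 + c3 • gens 3 + c4 • gens 4 + c5 • gens 5 ≠ Lg1 := by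
  decide

lemma Dwt : wt Lg1 = 3 := by decide

lemma hset : ({h1, h2, h3, h4, h5, h6} : Set (M 8)) = Set.range gens := by
  ext x
  simp only [gens, Matrix.range_cons, Matrix.range_empty, Set.union_empty,
    Set.mem_insert_iff, Set.mem_union, Set.mem_singleton_iff]

lemma hgens_mem : ∀ i : Fin 6, gens i ∈ S823 := by
  intro i
  apply Submodule.subset_span
  simp only [Set.mem_insert_iff, Set.mem_singleton_iff]
  fin_cases i
  · exact Or.inl rfl
  · exact Or.inr (Or.inl rfl)
  · exact Or.inr (Or.inr (Or.inl rfl))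
  · exact Or.inr (Or.inr (Or.inr (Or.inl rfl)))
  · exact Or.inr (Or.inr (Or.inr (Or.inr (Or.inl rfl))))
  · exact Or.inr (Or.inr (Or.inr (Or.inr (Or.inr rfl))))

lemma key1 (v : M 8) (hv : ∀ i, symp v (gens i) = 0) : ∀ s ∈ S823, symp v s = 0 := by
  intro s hs
  have hle : S823 ≤ LinearMap.ker (sympR v) := by
    rw [S823, Submodule.span_le]
    intro x hx
    simp only [Set.mem_insert_iff, Set.mem_singleton_iff] at hx
    rcases hx with rfl | rfl | rfl | rfl | rfl | rfl
    · exact LinearMap.mem_ker.mpr (hv 0)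
    · exact LinearMap.mem_ker.mpr (hv 1)
    · exact LinearMap.mem_ker.mpr (hv 2)
    · exact LinearMap.mem_ker.mpr (hv 3)
    · exact LinearMap.mem_ker.mpr (hv 4)
    · exact LinearMap.mem_ker.mpr (hv 5)
  exact LinearMap.mem_ker.mp (hle hs)

lemma key1' (v : M 8) (hv : ∀ s ∈ S823, symp v s = 0) : φ v = 0 :=
  funext fun i => hv (gens i) (hgens_mem i)

lemma hli6 : LinearIndependent (ZMod 2) gens := by
  rw [Fintype.linearIndependent_iff]
  intro g hg
  rw [Fin.sum_univ_six] at hg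
  obtain ⟨e0, e1, e2, e3, e4, e5⟩ := D6 (g 0) (g 1) (g 2) (g 3) (g 4) (g 5) hg
  intro i
  fin_cases i <;> assumption

lemma hli10 : LinearIndependent (ZMod 2) bs := by
  rw [Fintype.linearIndependent_iff]
  intro g hg
  rw [expand10] at hg
  obtain ⟨e0, e1, e2, e3, e4, e5, e6, e7, e8, e9⟩ :=
    D10 (g 0) (g 1) (g 2) (g 3) (g 4) (g 5) (g 6) (g 7) (g 8) (g 9) hg
  intro i
  fin_cases i <;> assumption

lemma hrange_top : LinearMap.range φ = ⊤ := by
  rw [LinearMap.range_eq_top]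
  intro y
  refine ⟨∑ i, y i • ts i, ?_⟩
  rw [map_sum]
  funext j
  simp only [map_smul, Finset.sum_apply, Pi.smul_apply, phi_apply, D_ts, smul_eq_mul,
    mul_ite, mul_one, mul_zero]
  simp

lemma hbs_le : Submodule.span (ZMod 2) (Set.range bs) ≤ LinearMap.ker φ := by
  rw [Submodule.span_le]
  rintro x ⟨i, rfl⟩
  exact LinearMap.mem_ker.mpr (funext fun j => D_perp_bs i j)

lemma hM16 : Module.finrank (ZMod 2) (M 8) = 16 := by
  simp [Module.finrank_pi_fintype]

lemma hker_eq : LinearMap.ker φ = Submodule.span (ZMod 2) (Set.range bs) := by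
  refine (Submodule.eq_of_le_of_finrank_le hbs_le ?_).symm
  have h1 := LinearMap.finrank_range_add_finrank_ker φ
  rw [hrange_top, hM16] at h1
  have h2 : Module.finrank (ZMod 2) (⊤ : Submodule (ZMod 2) (Fin 6 → ZMod 2)) = 6 := by
    simp [finrank_top]
  rw [h2] at h1
  rw [finrank_span_eq_card hli10, Fintype.card_fin]
  omega

end Aux

theorem stmt12 :
    (∀ u ∈ S823, ∀ v ∈ S823, symp u v = 0) ∧
    Module.finrank (ZMod 2) S823 = 6 ∧
    sInf (wt '' {v : M 8 | (∀ s ∈ S823, symp v s = 0) ∧ v ∉ S823}) = 3 := by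
  have hS_eq : S823 = Submodule.span (ZMod 2) (Set.range gens) := by rw [S823, hset]
  refine ⟨?_, ?_, ?_⟩
  · -- isotropy
    intro u hu v hv
    refine key1 u (fun i => ?_) v hv
    have hu' : ∀ j, symp (gens j) u = 0 := fun j => key1 (gens j) (D_iso j) u hu
    calc symp u (gens i) = symp (gens i) u := by
          unfold symp
          refine Finset.sum_congr rfl fun j _ => by ring
      _ = 0 := hu' i
  · -- finrank
    rw [hS_eq, finrank_span_eq_card hli6]
    simp
  · -- distance
    have hw_mem : Lg1 ∈ {v : M 8 | (∀ s ∈ S823, symp v s = 0) ∧ v ∉ S823} := by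
      constructor
      · exact key1 Lg1 (fun j => D_perp_bs 6 j)
      · intro hmem
        rw [hS_eq, Submodule.mem_span_range_iff_exists_fun] at hmem
        obtain ⟨c, hc⟩ := hmem
        rw [Fin.sum_univ_six] at hc
        exact Dw_notin (c 0) (c 1) (c 2) (c 3) (c 4) (c 5) hc
    have h3mem : (3 : ℕ) ∈ wt '' {v : M 8 | (∀ s ∈ S823, symp v s = 0) ∧ v ∉ S823} :=
      ⟨Lg1, hw_mem, Dwt⟩
    refine le_antisymm (Nat.sInf_le h3mem) (le_csInf ⟨3, h3mem⟩ ?_)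
    rintro m ⟨v, ⟨hv1, hv2⟩, rfl⟩
    by_contra hlt
    push_neg at hlt
    have hvker : v ∈ LinearMap.ker φ := LinearMap.mem_ker.mpr (key1' v hv1)
    rw [hker_eq, Submodule.mem_span_range_iff_exists_fun] at hvker
    obtain ⟨c, hc⟩ := hvker
    rw [expand10] at hc
    obtain ⟨e6, e7, e8, e9⟩ :=
      DKD (c 0) (c 1) (c 2) (c 3) (c 4) (c 5) (c 6) (c 7) (c 8) (c 9) (by rw [hc]; omega)
    apply hv2
    rw [← hc, e6, e7, e8, e9]
    simp only [zero_smul, add_zero]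
    refine add_mem (add_mem (add_mem (add_mem (add_mem
      (Submodule.smul_mem _ _ ?_) (Submodule.smul_mem _ _ ?_)) (Submodule.smul_mem _ _ ?_))
      (Submodule.smul_mem _ _ ?_)) (Submodule.smul_mem _ _ ?_)) (Submodule.smul_mem _ _ ?_)
    · exact hgens_mem 0
    · exact hgens_mem 1
    · exact hgens_mem 2
    · exact hgens_mem 3
    · exact hgens_mem 4
    · exact hgens_mem 5
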